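/- Let θ be an irrational real number. For every n ≥ 1 and every real number γ, there exist positive integers k and l such that |e^{2πi k θ} − 1| < 1/n and |e^{2πi k N l θ} − e^{2πi γ}| < 1/n, where N ≥ 1 is any fixed integer. -/

import Mathlib

open Complex

private lemma lemA {α : ℝ} (hα : Irrational α) {ε : ℝ} (hε : 0 < ε) :
    ∃ (k : ℕ) (j : ℤ), 0 < k ∧ (k : ℝ) * α - j ≠ 0 ∧ |(k : ℝ) * α - j| < ε := by
  obtain ⟨m, hm⟩ := exists_nat_gt (1 / ε)
  have hm0 : 0 < m := by
    have : (0 : ℝ) < m := lt_trans (one_div_pos.2 hε) hm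
    exact_mod_cast this
  obtain ⟨j, k, hk0, hkm, hbound⟩ := Real.exists_int_int_abs_mul_sub_le α hm0
  have hkR : ((k.toNat : ℕ) : ℝ) = (k : ℝ) := by
    have := Int.toNat_of_nonneg hk0.le
    exact_mod_cast congrArg (fun z : ℤ => (z : ℝ)) this
  refine ⟨k.toNat, j, by omega, ?_, ?_⟩
  · intro h
    apply hα
    have hk0' : (k : ℝ) ≠ 0 := by exact_mod_cast hk0.ne'
    have hα' : α = (j : ℝ) / (k : ℝ) := by
      rw [hkR] at h
      field_simp
      linarith [sub_eq_zero.mp h]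
    refine ⟨(j : ℚ) / (k : ℚ), ?_⟩
    rw [hα']
    push_cast
    ring
  · rw [hkR]
    calc |(k : ℝ) * α - j| ≤ 1 / (m + 1) := hbound
      _ < ε := by
        rw [div_lt_iff₀ (by positivity)]
        have : 1 / ε < m + 1 := hm.trans (by linarith)
        rw [div_lt_iff₀ hε] at this
        linarith

private lemma lemB {α : ℝ} (hα : Irrational α) {ε : ℝ} (hε : 0 < ε) (γ : ℝ) :
    ∃ (l : ℕ) (j : ℤ), 0 < l ∧ |(l : ℝ) * α - γ - j| < ε := by
  obtain ⟨k, j₀, hk, hβ0, hβε⟩ := lemA hα hε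
  set β : ℝ := (k : ℝ) * α - j₀ with hβ
  have hβε' := abs_lt.mp hβε
  rcases hβ0.lt_or_gt with hneg | hpos
  · -- β < 0
    set j' : ℤ := -1 - ⌊γ⌋ with hj'
    set γ' : ℝ := γ + j' with hγ'
    have hγ'neg : γ' < 0 := by
      have h2 := Int.lt_floor_add_one γ
      simp only [hγ', hj']
      push_cast
      linarith
    set t : ℤ := ⌈γ' / β⌉ with ht
    have htpos : 0 < t := Int.ceil_pos.2 (div_pos_iff.2 (Or.inr ⟨hγ'neg, hneg⟩))
    have h1 : (t : ℝ) * β ≤ γ' := by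
      have hle := Int.le_ceil (γ' / β)
      rw [← ht] at hle
      calc (t : ℝ) * β ≤ (γ' / β) * β := mul_le_mul_of_nonpos_right hle hneg.le
        _ = γ' := by field_simp
    have h2 : γ' + β < (t : ℝ) * β := by
      have hlt := Int.ceil_lt_add_one (γ' / β)
      rw [← ht] at hlt
      have := mul_lt_mul_of_neg_right hlt hneg
      rw [add_mul, one_mul, div_mul_cancel₀ _ hβ0] at this
      linarith
    have hktpos : 0 < t * (k : ℤ) := mul_pos htpos (by exact_mod_cast hk)
    refine ⟨(t * (k : ℤ)).toNat, t * j₀ + j', by omega, ?_⟩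
    have hcast : (((t * (k : ℤ)).toNat : ℕ) : ℝ) = (t : ℝ) * k := by
      have := Int.toNat_of_nonneg hktpos.le
      have h := congrArg (fun z : ℤ => (z : ℝ)) this
      push_cast at h
      exact_mod_cast h
    rw [hcast]
    have heq : (t : ℝ) * k * α - γ - ((t * j₀ + j' : ℤ) : ℝ) = (t : ℝ) * β - γ' := by
      simp only [hβ, hγ']
      push_cast
      ring
    rw [heq, abs_lt]
    constructor
    · linarith
    · linarith
  · -- β > 0
    set j' : ℤ := 1 - ⌊γ⌋ with hj'
    set γ' : ℝ := γ + j' with hγ'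
    have hγ'pos : 0 < γ' := by
      have h2 := Int.floor_le γ
      simp only [hγ', hj']
      push_cast
      linarith
    set t : ℤ := ⌈γ' / β⌉ with ht
    have htpos : 0 < t := Int.ceil_pos.2 (div_pos hγ'pos hpos)
    have h1 : γ' ≤ (t : ℝ) * β := by
      have hle := Int.le_ceil (γ' / β)
      rw [← ht] at hle
      calc γ' = (γ' / β) * β := by field_simp
        _ ≤ (t : ℝ) * β := mul_le_mul_of_nonneg_right hle hpos.le
    have h2 : (t : ℝ) * β < γ' + β := by
      have hlt := Int.ceil_lt_add_one (γ' / β)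
      rw [← ht] at hlt
      have := mul_lt_mul_of_pos_right hlt hpos
      rw [add_mul, one_mul, div_mul_cancel₀ _ hβ0] at this
      linarith
    have hktpos : 0 < t * (k : ℤ) := mul_pos htpos (by exact_mod_cast hk)
    refine ⟨(t * (k : ℤ)).toNat, t * j₀ + j', by omega, ?_⟩
    have hcast : (((t * (k : ℤ)).toNat : ℕ) : ℝ) = (t : ℝ) * k := by
      have := Int.toNat_of_nonneg hktpos.le
      have h := congrArg (fun z : ℤ => (z : ℝ)) this
      push_cast at h
      exact_mod_cast h
    rw [hcast]
    have heq : (t : ℝ) * k * α - γ - ((t * j₀ + j' : ℤ) : ℝ) = (t : ℝ) * β - γ' := by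
      simp only [hβ, hγ']
      push_cast
      ring
    rw [heq, abs_lt]
    constructor
    · linarith
    · linarith

private lemma norm_exp_sub_exp_le (x y : ℝ) (j : ℤ)
    (h : |x - y - j| ≤ 1 / (2 * Real.pi)) :
    ‖Complex.exp (2 * Real.pi * I * x) - Complex.exp (2 * Real.pi * I * y)‖
      ≤ 4 * Real.pi * |x - y - j| := by
  have hπ : (0 : ℝ) < Real.pi := Real.pi_pos
  set z : ℂ := 2 * Real.pi * I * ((x : ℂ) - y - j) with hz
  have hzabs : ‖z‖ = 2 * Real.pi * |x - y - j| := by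
    rw [hz]
    have : ((x : ℂ) - y - j) = ((x - y - j : ℝ) : ℂ) := by push_cast; ring
    rw [this, norm_mul, norm_mul, norm_mul, Complex.norm_I, Complex.norm_real,
      Complex.norm_real, Real.norm_eq_abs, Real.norm_eq_abs, Complex.norm_two]
    rw [abs_of_pos hπ]
    ring
  have hz1 : ‖z‖ ≤ 1 := by
    rw [hzabs]
    rw [le_div_iff₀ (by positivity)] at h
    linarith
  have hsplit : Complex.exp (2 * Real.pi * I * x)
      = Complex.exp (2 * Real.pi * I * y) * Complex.exp z := by
    rw [← Complex.exp_add]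
    have hj : Complex.exp ((j : ℂ) * (2 * Real.pi * I)) = 1 :=
      Complex.exp_int_mul_two_pi_mul_I j
    have harg : (2 : ℂ) * Real.pi * I * x
        = (2 * Real.pi * I * y + z) + (j : ℂ) * (2 * Real.pi * I) := by
      rw [hz]; ring
    rw [harg, Complex.exp_add, hj, mul_one]
  have hnorm1 : ‖Complex.exp (2 * Real.pi * I * (y : ℂ))‖ = 1 := by
    rw [Complex.norm_exp]
    simp
  calc ‖Complex.exp (2 * Real.pi * I * x) - Complex.exp (2 * Real.pi * I * y)‖
      = ‖Complex.exp (2 * Real.pi * I * y) * (Complex.exp z - 1)‖ := by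
        rw [mul_sub, mul_one, ← hsplit]
    _ = ‖Complex.exp z - 1‖ := by rw [norm_mul, hnorm1, one_mul]
    _ ≤ 2 * ‖z‖ := Complex.norm_exp_sub_one_le hz1
    _ = 4 * Real.pi * |x - y - j| := by rw [hzabs]; ring

/-- for irrational `θ`, any `n ≥ 1`, any real `γ` and any fixed integer
`N ≥ 1`, there are positive integers `k, l` with `|e^{2πikθ} − 1| < 1/n` and
`|e^{2πikNlθ} − e^{2πiγ}| < 1/n`. -/
theorem exists_k_l_rotation_approx (θ : ℝ) (hθ : Irrational θ) (N : ℕ) (hN : 1 ≤ N)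
    (n : ℕ) (hn : 1 ≤ n) (γ : ℝ) :
    ∃ k l : ℕ, 0 < k ∧ 0 < l ∧
      ‖Complex.exp (2 * Real.pi * I * k * θ) - 1‖ < 1 / n ∧
      ‖Complex.exp (2 * Real.pi * I * k * N * l * θ) - Complex.exp (2 * Real.pi * I * γ)‖
        < 1 / n := by
  have hπ : (0 : ℝ) < Real.pi := Real.pi_pos
  have hπ4 : Real.pi < 3.15 := by linarith [Real.pi_lt_d2]
  have hn0 : (0 : ℝ) < n := by exact_mod_cast hn
  have hn1 : (1 : ℝ) ≤ n := by exact_mod_cast hn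
  set ε : ℝ := 1 / (13 * n) with hε_def
  have hε : 0 < ε := by positivity
  have hεle : ε ≤ 1 / 13 := by
    rw [hε_def]
    apply one_div_le_one_div_of_le (by norm_num)
    nlinarith
  have h2π : (1 : ℝ) / 13 ≤ 1 / (2 * Real.pi) := by
    apply one_div_le_one_div_of_le (by positivity)
    nlinarith
  -- step 1
  obtain ⟨k, j₁, hk, _, hk_bound⟩ := lemA hθ hε
  -- step 2
  have hkN : Irrational (((k * N : ℕ) : ℝ) * θ) := hθ.natCast_mul (by positivity)
  obtain ⟨l, j₂, hl, hl_bound⟩ := lemB hkN hε γ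
  refine ⟨k, l, hk, hl, ?_, ?_⟩
  · have h1 : |(k : ℝ) * θ - 0 - j₁| ≤ 1 / (2 * Real.pi) := by
      rw [sub_zero]
      linarith [hk_bound.le]
    have h2 := norm_exp_sub_exp_le ((k : ℝ) * θ) 0 j₁ h1
    have h3 : Complex.exp (2 * Real.pi * I * ((0 : ℝ) : ℂ)) = 1 := by
      norm_num
    rw [h3] at h2
    have harg : (2 : ℂ) * Real.pi * I * k * θ = 2 * Real.pi * I * (((k : ℝ) * θ : ℝ) : ℂ) := by
      push_cast; ring
    rw [harg]
    calc ‖Complex.exp (2 * Real.pi * I * (((k : ℝ) * θ : ℝ) : ℂ)) - 1‖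
        ≤ 4 * Real.pi * |(k : ℝ) * θ - 0 - j₁| := h2
      _ < 4 * Real.pi * ε := by
          apply mul_lt_mul_of_pos_left _ (by positivity)
          rw [sub_zero]; exact hk_bound
      _ < 13 * ε := by nlinarith
      _ = 1 / n := by rw [hε_def]; field_simp
  · have harg2 : (l : ℝ) * (((k * N : ℕ) : ℝ) * θ) = (k : ℝ) * N * l * θ := by
      push_cast; ring
    rw [harg2] at hl_bound
    have h1 : |(k : ℝ) * N * l * θ - γ - j₂| ≤ 1 / (2 * Real.pi) := by
      linarith [hl_bound.le]
    have h2 := norm_exp_sub_exp_le ((k : ℝ) * N * l * θ) γ j₂ h1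
    have harg : (2 : ℂ) * Real.pi * I * k * N * l * θ
        = 2 * Real.pi * I * (((k : ℝ) * N * l * θ : ℝ) : ℂ) := by
      push_cast; ring
    rw [harg]
    calc ‖Complex.exp (2 * Real.pi * I * (((k : ℝ) * N * l * θ : ℝ) : ℂ))
          - Complex.exp (2 * Real.pi * I * (γ : ℂ))‖
        ≤ 4 * Real.pi * |(k : ℝ) * N * l * θ - γ - j₂| := h2
      _ < 4 * Real.pi * ε := mul_lt_mul_of_pos_left hl_bound (by positivity)
      _ < 13 * ε := by nlinarith
      _ = 1 / n := by rw [hε_def]; field_simp
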